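/- In the one-state one-player game with states q₁ (priority 1) and q₂ (priority 0), edges q₁→q₁ with weight 1, q₁→q₂ with weight 0, and q₂→q₁ with weight 0, all states controlled by Player 1: the value from q₁ equals 1, but every finite-memory strategy of Player 1 achieves value strictly less than 1. Hence optimal strategies in mean-payoff parity games may require infinite memory. -/

import Mathlib

open Filter

/-- A (weighted) game graph with priorities: states are partitioned between
Player 1 (`isP1`) and Player 2, `E` is the edge relation, `w` the edge weights
and `col` the priority function. -/
structure Game (V : Type) where
  isP1 : V → Prop
  E : V → V → Prop
  w : V → V → ℝ
  col : V → ℕ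

variable {V : Type}

/-- An infinite play (infinite path in the graph). -/
def IsPlay (G : Game V) (ρ : ℕ → V) : Prop := ∀ n, G.E (ρ n) (ρ (n + 1))

/-- The set of states occurring infinitely often. -/
def InfOcc (ρ : ℕ → V) : Set V := {v | ∃ᶠ n in atTop, ρ n = v}

/-- The average weight of the first `n` edges of `ρ`. -/
noncomputable def avgW (G : Game V) (ρ : ℕ → V) (n : ℕ) : ℝ :=
  (∑ i ∈ Finset.range n, G.w (ρ i) (ρ (i + 1))) / n

/-- A play is parity-winning if the minimal priority seen infinitely often is even. -/
def ParityWin (G : Game V) (ρ : ℕ → V) : Prop := Even (sInf (G.col '' InfOcc ρ))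

/-- The payoff of a play: the liminf of the average weights if the play is
parity-winning, and `-∞` otherwise. -/
noncomputable def payoff (G : Game V) (ρ : ℕ → V) : EReal :=
  haveI := Classical.dec (ParityWin G ρ)
  if ParityWin G ρ then Filter.liminf (fun n => ((avgW G ρ n : ℝ) : EReal)) atTop else ⊥

/-- A strategy of Player 1: given the past history and the current state
(controlled by Player 1), choose a successor. -/
structure Strat1 (G : Game V) where
  f : List V → V → V
  valid : ∀ h c, G.isP1 c → G.E c (f h c)

/-- A strategy of Player 2. -/
structure Strat2 (G : Game V) where
  f : List V → V → V
  valid : ∀ h c, ¬ G.isP1 c → G.E c (f h c)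

def Memoryless1 {G : Game V} (σ : Strat1 G) : Prop := ∀ h h' c, σ.f h c = σ.f h' c
def Memoryless2 {G : Game V} (τ : Strat2 G) : Prop := ∀ h h' c, τ.f h c = τ.f h' c

/-- A play is consistent with a strategy of Player 1. -/
def Consistent1 (G : Game V) (σ : Strat1 G) (ρ : ℕ → V) : Prop :=
  ∀ n, G.isP1 (ρ n) → ρ (n + 1) = σ.f (List.ofFn fun i : Fin n => ρ i) (ρ n)

/-- A play is consistent with a strategy of Player 2. -/
def Consistent2 (G : Game V) (τ : Strat2 G) (ρ : ℕ → V) : Prop :=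
  ∀ n, ¬ G.isP1 (ρ n) → ρ (n + 1) = τ.f (List.ofFn fun i : Fin n => ρ i) (ρ n)

/-- The value of a Player 1 strategy from `q₀`: the infimum of the payoffs of
consistent plays from `q₀`. -/
noncomputable def val1 (G : Game V) (σ : Strat1 G) (q₀ : V) : EReal :=
  ⨅ ρ : {ρ : ℕ → V // IsPlay G ρ ∧ ρ 0 = q₀ ∧ Consistent1 G σ ρ}, payoff G ρ.val

/-- The value of a Player 2 strategy from `q₀`. -/
noncomputable def val2 (G : Game V) (τ : Strat2 G) (q₀ : V) : EReal :=
  ⨆ ρ : {ρ : ℕ → V // IsPlay G ρ ∧ ρ 0 = q₀ ∧ Consistent2 G τ ρ}, payoff G ρ.val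

/-- The lower value of a state. -/
noncomputable def lowVal (G : Game V) (q₀ : V) : EReal := ⨆ σ : Strat1 G, val1 G σ q₀

/-- The upper value of a state. -/
noncomputable def upVal (G : Game V) (q₀ : V) : EReal := ⨅ τ : Strat2 G, val2 G τ q₀

/-- The Player 1 attractor of a set `S`: the states from which Player 1 can
force a visit to `S`. -/
inductive Attr1 (G : Game V) (S : Set V) : V → Prop
  | base {v} : v ∈ S → Attr1 G S v
  | p1 {v u} : G.isP1 v → G.E v u → Attr1 G S u → Attr1 G S v
  | p2 {v} : ¬ G.isP1 v → (∃ u, G.E v u) → (∀ u, G.E v u → Attr1 G S u) → Attr1 G S v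

/-- The Player 2 attractor of a set `S`. -/
inductive Attr2 (G : Game V) (S : Set V) : V → Prop
  | base {v} : v ∈ S → Attr2 G S v
  | p2 {v u} : ¬ G.isP1 v → G.E v u → Attr2 G S u → Attr2 G S v
  | p1 {v} : G.isP1 v → (∃ u, G.E v u) → (∀ u, G.E v u → Attr2 G S u) → Attr2 G S v

/-- The game restricted to a subarena `T`. -/
def Game.restrict (G : Game V) (T : Set V) : Game T where
  isP1 v := G.isP1 v.val
  E a b := G.E a.val b.val
  w a b := G.w a.val b.val
  col v := G.col v.val

/-- The game of Example 1: state `true` is q₁ (priority 1), state `false` is q₂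
(priority 0); edges q₁→q₁ (weight 1), q₁→q₂ (weight 0), q₂→q₁ (weight 0);
all states belong to Player 1. -/
def exGame : Game Bool where
  isP1 _ := True
  E a b := a = true ∨ b = true
  w a b := if a = true ∧ b = true then 1 else 0
  col v := if v = true then 1 else 0
section Aux

lemma exGame_w (a b : Bool) : exGame.w a b = if a = true ∧ b = true then 1 else 0 := rfl

lemma sumW (ρ : ℕ → Bool) (n : ℕ) :
    ∑ i ∈ Finset.range n, exGame.w (ρ i) (ρ (i + 1)) =
      (((Finset.range n).filter (fun i => ρ i = true ∧ ρ (i+1) = true)).card : ℝ) := by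
  simp only [exGame_w]
  rw [Finset.sum_boole]

lemma avgW_le_one (ρ : ℕ → Bool) (n : ℕ) : avgW exGame ρ n ≤ 1 := by
  rcases Nat.eq_zero_or_pos n with h | h
  · simp [avgW, h]
  · rw [avgW, div_le_one (by positivity), sumW]
    calc (((Finset.range n).filter (fun i => ρ i = true ∧ ρ (i+1) = true)).card : ℝ)
        ≤ ((Finset.range n).card : ℝ) := by
          exact_mod_cast Finset.card_le_card (Finset.filter_subset _ _)
      _ = n := by simp

lemma payoff_le_one (ρ : ℕ → Bool) : payoff exGame ρ ≤ 1 := by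
  simp only [payoff]
  split_ifs with h
  · refine liminf_le_of_frequently_le (Frequently.of_forall fun n => ?_)
    rw [show (1 : EReal) = ((1:ℝ):EReal) from rfl, EReal.coe_le_coe_iff]
    exact avgW_le_one ρ n
  · exact bot_le

end Aux
section Part1

/-- The sparse play: `false` exactly at squares ≥ 4. -/
def rho0 : ℕ → Bool := fun n => if Nat.sqrt n * Nat.sqrt n = n ∧ 4 ≤ n then false else true

lemma rho0_false_iff {j : ℕ} : rho0 j = false ↔ (Nat.sqrt j * Nat.sqrt j = j ∧ 4 ≤ j) := by
  unfold rho0; split_ifs with h <;> simp [h]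

lemma rho0_sq {k : ℕ} (hk : 2 ≤ k) : rho0 (k * k) = false := by
  rw [rho0_false_iff]
  constructor
  · rw [Nat.sqrt_eq]
  · calc 4 = 2 * 2 := rfl
      _ ≤ k * k := Nat.mul_le_mul hk hk

lemma rho0_play : IsPlay exGame rho0 := by
  intro n
  show rho0 n = true ∨ rho0 (n+1) = true
  by_contra h
  push_neg at h
  obtain ⟨h1, h2⟩ := h
  simp only [Bool.not_eq_true] at h1 h2
  obtain ⟨hs, hn4⟩ := rho0_false_iff.mp h1
  obtain ⟨ht, _⟩ := rho0_false_iff.mp h2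
  set s := Nat.sqrt n
  set t := Nat.sqrt (n+1)
  have hst : s < t := by
    have : s * s < t * t := by omega
    exact Nat.mul_self_lt_mul_self_iff.mp this
  have hs2 : 2 ≤ s := by nlinarith
  have : (s+1) * (s+1) ≤ t * t := Nat.mul_le_mul hst hst
  nlinarith

lemma rho0_freq_false : ∃ᶠ n in atTop, rho0 n = false := by
  rw [frequently_atTop]
  intro N
  refine ⟨(N + 2) * (N + 2), ?_, rho0_sq (by omega)⟩
  nlinarith

end Part1
section Count

lemma rho0_count (n d : ℕ) :
    ((Finset.range n).filter (fun i => rho0 (i + d) = false)).card ≤ Nat.sqrt (n + d) + 1 := by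
  have := Finset.card_le_card_of_injOn (s := (Finset.range n).filter (fun i => rho0 (i + d) = false))
    (t := Finset.range (Nat.sqrt (n + d) + 1)) (fun i => Nat.sqrt (i + d)) ?_ ?_
  · simpa using this
  · intro a ha
    simp only [Finset.mem_coe, Finset.mem_filter, Finset.mem_range] at ha ⊢
    have : a + d ≤ n + d := by omega
    exact Nat.lt_succ_of_le (Nat.sqrt_le_sqrt this)
  · intro a ha b hb hab
    simp only [Finset.coe_filter, Set.mem_setOf_eq, Finset.mem_range] at ha hb
    have ha' := (rho0_false_iff.mp ha.2).1
    have hb' := (rho0_false_iff.mp hb.2).1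
    simp only at hab
    rw [hab] at ha'
    omega

lemma sqrt_tendsto : Tendsto (fun n => Nat.sqrt (n + 1)) atTop atTop := by
  rw [tendsto_atTop_atTop]
  intro b
  refine ⟨b * b, fun n hn => ?_⟩
  calc b = Nat.sqrt (b * b) := (Nat.sqrt_eq b).symm
    _ ≤ Nat.sqrt (n + 1) := Nat.sqrt_le_sqrt (by omega)

lemma sqrt_div_tendsto : Tendsto (fun n : ℕ => (Nat.sqrt (n + 1) : ℝ) / n) atTop (nhds 0) := by
  have h1 : Tendsto (fun n : ℕ => (2 : ℝ) / (Nat.sqrt (n + 1) : ℝ)) atTop (nhds 0) := by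
    apply Tendsto.div_atTop tendsto_const_nhds
    exact tendsto_natCast_atTop_atTop.comp sqrt_tendsto
  apply squeeze_zero' (g := fun n : ℕ => (2 : ℝ) / (Nat.sqrt (n + 1) : ℝ)) ?_ ?_ h1
  · filter_upwards [eventually_ge_atTop 1] with n hn
    positivity
  · filter_upwards [eventually_ge_atTop 1] with n hn
    set s := Nat.sqrt (n + 1)
    have hs1 : 1 ≤ s := by
      have : Nat.sqrt 1 ≤ s := Nat.sqrt_le_sqrt (by omega)
      simpa using this
    have hss : s * s ≤ n + 1 := by simpa [pow_two] using Nat.sqrt_le' (n + 1)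
    rw [div_le_div_iff₀ (by positivity) (by positivity)]
    have : (s : ℝ) * s ≤ n + 1 := by exact_mod_cast hss
    have hn' : (1:ℝ) ≤ n := by exact_mod_cast hn
    nlinarith

end Count
section Rho0Payoff

lemma rho0_avg_lower (n : ℕ) :
    ((n:ℝ) - 2 * (Nat.sqrt (n+1) + 1)) / n ≤ avgW exGame rho0 n := by
  rcases Nat.eq_zero_or_pos n with h | h
  · simp [avgW, h]
  · rw [avgW, div_le_div_iff_of_pos_right (by exact_mod_cast h), sumW]
    set P := fun i => rho0 i = true ∧ rho0 (i+1) = true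
    have hsplit : ((Finset.range n).filter P).card
        + ((Finset.range n).filter (fun i => ¬ P i)).card = n := by
      rw [Finset.card_filter_add_card_filter_not]; simp
    have hsub : (Finset.range n).filter (fun i => ¬ P i) ⊆
        ((Finset.range n).filter (fun i => rho0 i = false)) ∪
        ((Finset.range n).filter (fun i => rho0 (i+1) = false)) := by
      intro i hi
      simp only [Finset.mem_filter, Finset.mem_union, P] at hi ⊢
      rcases hi with ⟨hi1, hi2⟩
      rw [Decidable.not_and_iff_or_not] at hi2
      rcases hi2 with h' | h' <;> simp only [Bool.not_eq_true] at h'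
      · exact Or.inl ⟨hi1, h'⟩
      · exact Or.inr ⟨hi1, h'⟩
    have hA : ((Finset.range n).filter (fun i => rho0 i = false)).card ≤ Nat.sqrt (n+1) + 1 := by
      have := rho0_count n 0
      simp only [Nat.add_zero] at this
      exact this.trans (by have : Nat.sqrt n ≤ Nat.sqrt (n+1) := Nat.sqrt_le_sqrt (by omega); omega)
    have hB : ((Finset.range n).filter (fun i => rho0 (i+1) = false)).card ≤ Nat.sqrt (n+1) + 1 :=
      rho0_count n 1
    have hneg : ((Finset.range n).filter (fun i => ¬ P i)).card ≤ 2 * (Nat.sqrt (n+1) + 1) := by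
      calc ((Finset.range n).filter (fun i => ¬ P i)).card
          ≤ (((Finset.range n).filter (fun i => rho0 i = false)) ∪
             ((Finset.range n).filter (fun i => rho0 (i+1) = false))).card :=
            Finset.card_le_card hsub
        _ ≤ _ := by
            refine (Finset.card_union_le _ _).trans ?_
            omega
    have : (n : ℝ) - 2 * (Nat.sqrt (n+1) + 1) ≤ ((Finset.range n).filter P).card := by
      have h1 : (n : ℝ) = ((Finset.range n).filter P).card
          + ((Finset.range n).filter (fun i => ¬ P i)).card := by exact_mod_cast hsplit.symm
      have h2 : (((Finset.range n).filter (fun i => ¬ P i)).card : ℝ)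
          ≤ 2 * (Nat.sqrt (n+1) + 1) := by exact_mod_cast hneg
      linarith
    exact this

lemma rho0_avg_tendsto : Tendsto (avgW exGame rho0) atTop (nhds 1) := by
  have t1 : Tendsto (fun n : ℕ => ((n:ℝ) - 2 * (Nat.sqrt (n+1) + 1)) / n) atTop (nhds 1) := by
    have h0 : Tendsto (fun n : ℕ =>
        1 - 2 * ((Nat.sqrt (n+1) : ℝ)/n) - 2 * ((1:ℝ)/n)) atTop
        (nhds (1 - 2 * 0 - 2 * 0)) := by
      exact ((tendsto_const_nhds.sub (sqrt_div_tendsto.const_mul 2)).sub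
        (tendsto_one_div_atTop_nhds_zero_nat.const_mul 2))
    norm_num at h0
    apply h0.congr'
    filter_upwards [eventually_ge_atTop 1] with n hn
    have hn' : (n:ℝ) ≠ 0 := by positivity
    field_simp
    ring
  exact tendsto_of_tendsto_of_tendsto_of_le_of_le' t1 tendsto_const_nhds
    (Eventually.of_forall rho0_avg_lower) (Eventually.of_forall (avgW_le_one rho0))

lemma rho0_payoff : payoff exGame rho0 = 1 := by
  have hPW : ParityWin exGame rho0 := by
    unfold ParityWin
    have : sInf (exGame.col '' InfOcc rho0) = 0 := by
      apply Nat.sInf_eq_zero.mpr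
      exact Or.inl ⟨false, rho0_freq_false, rfl⟩
    rw [this]; exact Even.zero
  simp only [payoff]
  rw [if_pos hPW]
  have : Tendsto (fun n => ((avgW exGame rho0 n : ℝ) : EReal)) atTop (nhds ((1:ℝ) : EReal)) :=
    EReal.tendsto_coe.mpr rho0_avg_tendsto
  rw [this.liminf_eq]
  rfl

end Rho0Payoff
section Part2

def rhoS (σ : Strat1 exGame) : ℕ → Bool
  | 0 => true
  | n+1 => σ.f (List.ofFn fun i : Fin n => rhoS σ i) (rhoS σ n)

lemma rhoS_zero (σ : Strat1 exGame) : rhoS σ 0 = true := by rw [rhoS]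

lemma rhoS_cons (σ : Strat1 exGame) : Consistent1 exGame σ (rhoS σ) := by
  intro n _
  rw [rhoS]

lemma rhoS_play (σ : Strat1 exGame) : IsPlay exGame (rhoS σ) := by
  intro n
  rw [rhoS]
  exact σ.valid _ _ trivial

lemma payoff_bot_of_eventually_true (ρ : ℕ → Bool) (hev : ∀ᶠ n in atTop, ρ n = true) :
    payoff exGame ρ = ⊥ := by
  have himg : exGame.col '' InfOcc ρ = {1} := by
    ext m
    constructor
    · rintro ⟨v, hv, rfl⟩
      cases v with
      | false =>
        exfalso
        obtain ⟨n, h1, h2⟩ := (hv.and_eventually hev).exists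
        rw [h2] at h1; exact Bool.noConfusion h1
      | true => rfl
    · rintro rfl
      refine ⟨true, hev.frequently, rfl⟩
  have : ¬ ParityWin exGame ρ := by
    unfold ParityWin
    rw [himg]
    simp
  simp only [payoff]
  rw [if_neg this]

end Part2
section CaseB

lemma avg_upper_of_dense (ρ : ℕ → Bool) (m : ℕ)
    (h : ∀ n, ∃ k ≤ m, ρ (n + k) = false) (n : ℕ) :
    avgW exGame ρ n ≤ ((n - n/(m+1) : ℕ) : ℝ) / n := by
  classical
  rcases Nat.eq_zero_or_pos n with h0 | h0
  · simp [avgW, h0]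
  rw [avgW, div_le_div_iff_of_pos_right (by exact_mod_cast h0), sumW]
  have key : ((Finset.range n).filter (fun i => ρ i = true ∧ ρ (i+1) = true)).card
      ≤ n - n/(m+1) := by
    set T := n/(m+1) with hT
    set pos : ℕ → ℕ := fun t => 1 + (m+1)*t + (h (1+(m+1)*t)).choose with hpos
    have hKm : ∀ t, (h (1+(m+1)*t)).choose ≤ m := fun t => (h (1+(m+1)*t)).choose_spec.1
    have hKf : ∀ t, ρ (pos t) = false := fun t => (h (1+(m+1)*t)).choose_spec.2
    have hposlb : ∀ t, 1 + (m+1)*t ≤ pos t := fun t => by simp [hpos]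
    have hposub : ∀ t, pos t ≤ (m+1)*(t+1) := by
      intro t
      have := hKm t
      have e : (m+1)*(t+1) = (m+1)*t + (m+1) := by ring
      simp only [hpos]; omega
    have hmono : StrictMono pos := by
      intro a b hab
      have h1 : (m+1)*(a+1) ≤ (m+1)*b := Nat.mul_le_mul_left _ hab
      have := hposub a
      have := hposlb b
      omega
    set B := (Finset.range n).filter (fun i => ρ (i+1) = false) with hB
    have hTB : T ≤ B.card := by
      have := Finset.card_le_card_of_injOn (s := Finset.range T) (t := B)
        (fun t => pos t - 1) ?_ ?_
      · simpa using this
      · intro t ht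
        simp only [Finset.mem_coe, Finset.mem_range] at ht
        have hub : pos t ≤ n := by
          have h1 : (m+1)*(t+1) ≤ (m+1)*T := Nat.mul_le_mul_left _ ht
          have h2 : T * (m+1) ≤ n := Nat.div_mul_le_self n (m+1)
          have := hposub t
          have h3 : (m+1)*T = T*(m+1) := Nat.mul_comm _ _
          omega
        have hlb := hposlb t
        simp only [Finset.mem_coe, hB, Finset.mem_filter, Finset.mem_range]
        constructor
        · omega
        · have : pos t - 1 + 1 = pos t := by omega
          rw [this]; exact hKf t
      · intro a _ b _ hab
        simp only at hab
        have ha := hposlb a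
        have hb := hposlb b
        have : pos a = pos b := by omega
        exact hmono.injective this
    have hsub : (Finset.range n).filter (fun i => ρ i = true ∧ ρ (i+1) = true)
        ⊆ Finset.range n \ B := by
      intro i hi
      simp only [Finset.mem_filter, hB, Finset.mem_sdiff, Finset.mem_range] at hi ⊢
      refine ⟨hi.1, ?_⟩
      rintro ⟨-, hfalse⟩
      rw [hi.2.2] at hfalse
      exact Bool.noConfusion hfalse
    calc ((Finset.range n).filter (fun i => ρ i = true ∧ ρ (i+1) = true)).card
        ≤ (Finset.range n \ B).card := Finset.card_le_card hsub
      _ = n - B.card := by rw [Finset.card_sdiff_of_subset (by simp [hB, Finset.filter_subset])]; simp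
      _ ≤ n - T := Nat.sub_le_sub_left hTB n
  exact_mod_cast key

lemma payoff_lt_one_of_dense (ρ : ℕ → Bool) (m : ℕ)
    (h : ∀ n, ∃ k ≤ m, ρ (n + k) = false) : payoff exGame ρ < 1 := by
  set r : ℝ := 1 - 1/(2*(m+1)) with hr
  have hrlt : r < 1 := by
    have : (0:ℝ) < 1/(2*(m+1)) := by positivity
    rw [hr]; linarith
  have hev : ∀ᶠ n in atTop, avgW exGame ρ n ≤ r := by
    filter_upwards [eventually_ge_atTop (2*m+1)] with n hn
    refine (avg_upper_of_dense ρ m h n).trans ?_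
    set T := n/(m+1) with hT
    have h3 : n ≤ 2*(m+1)*T := by
      rw [mul_assoc, hT]
      have hX := Nat.div_add_mod n (m+1)
      have h5 : n % (m+1) < m + 1 := Nat.mod_lt _ (Nat.succ_pos m)
      omega
    have hn1 : 1 ≤ n := by omega
    have hn0 : (0:ℝ) < n := by exact_mod_cast hn1
    have hTn : T ≤ n := Nat.div_le_self _ _
    have hc : ((n - T : ℕ):ℝ) = (n:ℝ) - T := by
      push_cast [hTn]; ring
    rw [hc]
    have hcast : (n:ℝ) ≤ 2*((m:ℝ)+1)*(T:ℝ) := by exact_mod_cast h3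
    have hcpos : (0:ℝ) < 2*((m:ℝ)+1) := by positivity
    have key : (1:ℝ)/(2*((m:ℝ)+1)) ≤ (T:ℝ)/n := by
      rw [div_le_div_iff₀ hcpos hn0]
      nlinarith
    have e : ((n:ℝ) - T)/n = 1 - (T:ℝ)/n := by
      field_simp
    rw [e, hr]
    have : ((m:ℕ):ℝ) + 1 = ((m+1:ℕ):ℝ) := by push_cast; ring
    linarith
  simp only [payoff]
  split_ifs with hPW
  · have hlim : liminf (fun n => ((avgW exGame ρ n : ℝ) : EReal)) atTop ≤ ((r:ℝ) : EReal) := by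
      exact liminf_le_of_frequently_le
        ((hev.mono fun n hn => EReal.coe_le_coe_iff.mpr hn).frequently)
    refine lt_of_le_of_lt hlim ?_
    rw [show (1:EReal) = ((1:ℝ):EReal) from rfl, EReal.coe_lt_coe_iff]
    exact hrlt
  · exact lt_of_lt_of_le EReal.bot_lt_zero zero_le_one

end CaseB

theorem exGame_value_one_but_finite_memory_suboptimal :
    (⨆ ρ : {ρ : ℕ → Bool // IsPlay exGame ρ ∧ ρ 0 = true}, payoff exGame ρ.val) = (1 : EReal) ∧
    ∀ σ : Strat1 exGame,
      (∃ m : ℕ, ∀ ρ : ℕ → Bool, IsPlay exGame ρ → ρ 0 = true → Consistent1 exGame σ ρ →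
        ((∀ᶠ n in atTop, ρ n = true) ∨ ∀ n, ∃ k ≤ m, ρ (n + k) = false)) →
      val1 exGame σ true < (1 : EReal) := by
  constructor
  · apply le_antisymm
    · exact iSup_le fun ρ => payoff_le_one ρ.1
    · refine le_iSup_of_le ⟨rho0, rho0_play, by decide⟩ ?_
      rw [rho0_payoff]
  · rintro σ ⟨m, hm⟩
    have hval : val1 exGame σ true ≤ payoff exGame (rhoS σ) :=
      iInf_le (fun ρ : {ρ : ℕ → Bool // IsPlay exGame ρ ∧ ρ 0 = true ∧ Consistent1 exGame σ ρ} =>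
          payoff exGame ρ.val)
        ⟨rhoS σ, rhoS_play σ, rhoS_zero σ, rhoS_cons σ⟩
    rcases hm (rhoS σ) (rhoS_play σ) (rhoS_zero σ) (rhoS_cons σ) with hA | hB
    · refine lt_of_le_of_lt (hval.trans ?_) (lt_of_lt_of_le EReal.bot_lt_zero zero_le_one)
      rw [payoff_bot_of_eventually_true _ hA]
    · exact lt_of_le_of_lt hval (payoff_lt_one_of_dense _ m hB)
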